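/- arXiv:2306.01165 — 2 statements merged into one kernel-verified Lean document; each statement's English description precedes it below -/
import Mathlib

section
/- Let S be a t-conorm continuous in its first coordinate and X a set with at least two elements. Every fuzzy binary relation on X is strongly decomposable with respect to S and the drastic t-norm T_D if and only if every t ∈ (0,1) is a 1-divisor of S, i.e., for every t ∈ (0,1) there exists b ∈ (0,1) with S(t,b) = 1. -/
structure Tconorm where
  S : unitInterval → unitInterval → unitInterval
  comm : ∀ a b, S a b = S b a
  assoc : ∀ a b c, S a (S b c) = S (S a b) c
  mono : ∀ a b c d, a ≤ c → b ≤ d → S a b ≤ S c d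
  S_zero : ∀ a, S a 0 = a
  S_one : ∀ a, S a 1 = 1

structure Tnorm where
  T : unitInterval → unitInterval → unitInterval
  comm : ∀ a b, T a b = T b a
  assoc : ∀ a b c, T a (T b c) = T (T a b) c
  mono : ∀ a b c d, a ≤ c → b ≤ d → T a b ≤ T c d
  T_one : ∀ a, T a 1 = a
  T_zero : ∀ a, T a 0 = 0

/-- A fuzzy binary relation `P` is asymmetric. -/
def FAsymm {X : Type*} (P : X → X → unitInterval) : Prop :=
  ∀ x y, 0 < P x y → P y x = 0

/-- A fuzzy binary relation `I` is symmetric. -/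
def FSymm {X : Type*} (I : X → X → unitInterval) : Prop :=
  ∀ x y, I x y = I y x

/-- `(P, I)` is a weak decomposition of `R` with respect to the t-conorm `S`. -/
def IsWeakDecomp {X : Type*} (S : Tconorm) (R P I : X → X → unitInterval) : Prop :=
  FAsymm P ∧ FSymm I ∧ (∀ x y, R x y = S.S (P x y) (I x y)) ∧
    ∀ x y, I x y = 1 → P x y = 0

/-- `(P, I)` is a strong decomposition of `R` with respect to `(T, S)`. -/
def IsStrongDecomp {X : Type*} (T : Tnorm) (S : Tconorm)
    (R P I : X → X → unitInterval) : Prop :=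
  FAsymm P ∧ FSymm I ∧ (∀ x y, R x y = S.S (P x y) (I x y)) ∧
    ∀ x y, T.T (P x y) (I x y) = 0

/-- The triplet `(R, P, I)` is a fuzzy preference (FP1–FP6). -/
def IsFuzzyPref {X : Type*} (R P I : X → X → unitInterval) : Prop :=
  (∀ x y, 0 < P x y → P y x = 0) ∧
  (∀ x y, I x y = I y x) ∧
  (∀ x y, P x y ≤ R x y) ∧
  (∀ x y, R y x < R x y ↔ 0 < P x y) ∧
  (∀ x y, P x y = 0 → R x y = I x y) ∧
  (∀ x y z w, I x y ≤ I z w → P x y ≤ P z w → R x y ≤ R z w)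

open scoped Classical in
/-- The drastic t-norm. -/
noncomputable def TD : unitInterval → unitInterval → unitInterval :=
  fun a b => if b = 1 then a else if a = 1 then b else 0


lemma S_zero_left (S : Tconorm) (a : unitInterval) : S.S 0 a = a := by
  rw [S.comm, S.S_zero]

lemma S_one_left (S : Tconorm) (a : unitInterval) : S.S 1 a = 1 := by
  rw [S.comm, S.S_one]

lemma le_S_left (S : Tconorm) (a b : unitInterval) : a ≤ S.S a b := by
  have := S.mono a 0 a b le_rfl unitInterval.nonneg'
  rwa [S.S_zero] at this

lemma le_S_right (S : Tconorm) (a b : unitInterval) : b ≤ S.S a b := by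
  rw [S.comm]; exact le_S_left S b a

lemma TD_zero_left (b : unitInterval) : TD 0 b = 0 := by
  unfold TD
  split_ifs with h1 h2
  · rfl
  · exact absurd h2 zero_ne_one
  · rfl

lemma TD_eq_zero (a b : unitInterval) (hb : b ≠ 1) (ha : a = 1 → b = 0) : TD a b = 0 := by
  unfold TD
  split_ifs with h1 h2
  exacts [absurd h1 hb, ha h2, rfl]

lemma key_exists (S : Tconorm) (hc : ∀ b, Continuous fun a => S.S a b)
    (H : ∀ t : unitInterval, 0 < t → t < 1 → ∃ b : unitInterval, 0 < b ∧ b < 1 ∧ S.S t b = 1)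
    (t r : unitInterval) (htr : t < r) :
    ∃ a : unitInterval, 0 < a ∧ S.S a t = r ∧ (a = 1 → t = 0) := by
  rcases eq_or_lt_of_le (unitInterval.le_one' : r ≤ 1) with hr1 | hr1
  · subst hr1
    rcases eq_or_lt_of_le (unitInterval.nonneg' : 0 ≤ t) with ht0 | ht0
    · exact ⟨1, zero_lt_one, by rw [← ht0, S.S_zero], fun _ => ht0.symm⟩
    · obtain ⟨b, hb0, hb1, hbS⟩ := H t ht0 htr
      exact ⟨b, hb0, by rw [S.comm]; exact hbS, fun h => absurd h hb1.ne⟩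
  · have hfc : Continuous fun a : unitInterval => ((S.S a t : unitInterval) : ℝ) :=
      continuous_subtype_val.comp (hc t)
    have h0 : ((S.S 0 t : unitInterval) : ℝ) ≤ (r : ℝ) := by
      rw [S_zero_left]; exact_mod_cast htr.le
    have h1 : (r : ℝ) ≤ ((S.S 1 t : unitInterval) : ℝ) := by
      rw [S_one_left]; exact r.2.2
    obtain ⟨a, ha⟩ := intermediate_value_univ (0 : unitInterval) 1 hfc ⟨h0, h1⟩
    have haS : S.S a t = r := Subtype.ext ha
    refine ⟨a, ?_, haS, fun h1' => ?_⟩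
    · rcases eq_or_lt_of_le (unitInterval.nonneg' : 0 ≤ a) with h | h
      · exfalso
        have : S.S a t = t := by rw [← h, S_zero_left]
        exact absurd (this ▸ haS) htr.ne
      · exact h
    · exfalso
      rw [h1', S_one_left] at haS
      exact absurd haS.symm hr1.ne

/-- With `S` continuous in the first coordinate, every fuzzy binary relation is
strongly decomposable w.r.t. `S` and the drastic t-norm iff every `t ∈ (0,1)` is a
`1`-divisor of `S`. -/
theorem strong_decomp_drastic_iff_one_divisors {X : Type*} (hX : ∃ x y : X, x ≠ y)
    (S : Tconorm) (hc : ∀ b, Continuous fun a => S.S a b) :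
    (∀ R : X → X → unitInterval, ∃ P I : X → X → unitInterval,
        FAsymm P ∧ FSymm I ∧ (∀ x y, R x y = S.S (P x y) (I x y)) ∧
          ∀ x y, TD (P x y) (I x y) = 0) ↔
    (∀ t : unitInterval, 0 < t → t < 1 → ∃ b : unitInterval, 0 < b ∧ b < 1 ∧ S.S t b = 1) := by
  constructor
  · -- decomposability implies 1-divisors
    intro h t ht0 ht1
    obtain ⟨x, y, hxy⟩ := hX
    classical
    set R : X → X → unitInterval := fun a b =>
      if a = x ∧ b = y then 1 else if a = y ∧ b = x then t else 0 with hRdef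
    obtain ⟨P, I, hPa, hIs, hR, hTD⟩ := h R
    have hRxy : R x y = 1 := by simp [hRdef]
    have hRyx : R y x = t := by simp [hRdef, hxy, Ne.symm hxy]
    have hIyx_le : I y x ≤ t := by
      rw [← hRyx, hR y x]; exact le_S_right S _ _
    have hIxy_lt1 : I x y < 1 := by
      rw [hIs x y]; exact lt_of_le_of_lt hIyx_le ht1
    have hPxy_pos : 0 < P x y := by
      rcases eq_or_lt_of_le (unitInterval.nonneg' : 0 ≤ P x y) with hp | hp
      · exfalso
        have h1 : (1 : unitInterval) = I x y := by
          rw [← hRxy, hR x y, ← hp, S_zero_left]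
        exact absurd h1.symm hIxy_lt1.ne
      · exact hp
    have hPyx : P y x = 0 := hPa x y hPxy_pos
    have hIyx : I y x = t := by
      have := hRyx
      rw [hR y x, hPyx, S_zero_left] at this
      exact this
    have hIxy : I x y = t := (hIs x y).trans hIyx
    have hPxy_lt1 : P x y < 1 := by
      rcases eq_or_lt_of_le (unitInterval.le_one' : P x y ≤ 1) with hp | hp
      · exfalso
        have htd := hTD x y
        rw [hp] at htd
        have hI1 : I x y ≠ 1 := hIxy_lt1.ne
        unfold TD at htd
        rw [if_neg hI1, if_pos rfl] at htd
        rw [hIxy] at htd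
        exact absurd htd ht0.ne'
      · exact hp
    refine ⟨P x y, hPxy_pos, hPxy_lt1, ?_⟩
    rw [S.comm, ← hIxy, ← hR x y, hRxy]
  · -- 1-divisors imply decomposability
    intro H R
    classical
    refine ⟨fun x y => if h : R y x < R x y then
        (key_exists S hc H (R y x) (R x y) h).choose else 0,
      fun x y => min (R x y) (R y x), ?_, ?_, ?_, ?_⟩
    · intro x y hpos
      dsimp only at hpos ⊢
      by_cases h : R y x < R x y
      · exact dif_neg (not_lt.mpr h.le)
      · rw [dif_neg h] at hpos
        exact absurd hpos (lt_irrefl 0)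
    · intro x y
      exact min_comm _ _
    · intro x y
      dsimp only
      by_cases h : R y x < R x y
      · rw [dif_pos h, min_eq_right h.le,
          (key_exists S hc H (R y x) (R x y) h).choose_spec.2.1]
      · rw [dif_neg h, min_eq_left (not_lt.mp h), S_zero_left]
    · intro x y
      dsimp only
      by_cases h : R y x < R x y
      · rw [dif_pos h, min_eq_right h.le]
        obtain ⟨-, -, h1imp⟩ := (key_exists S hc H (R y x) (R x y) h).choose_spec
        refine TD_eq_zero _ _ ?_ h1imp
        intro hb
        rw [hb] at h
        exact absurd unitInterval.le_one' (not_le.mpr h)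
      · rw [dif_neg h]
        exact TD_zero_left _
end

section
/- Let S be a t-conorm and X a set with at least two elements. Every fuzzy binary relation R on X admits a weak decomposition with respect to S if and only if S is continuous in its first coordinate. -/
theorem Tconorm.zero_S (S : Tconorm) (b : unitInterval) : S.S 0 b = b := by
  rw [S.comm, S.S_zero]

theorem Tconorm.one_S (S : Tconorm) (b : unitInterval) : S.S 1 b = 1 := by
  rw [S.comm, S.S_one]

/-- Every fuzzy binary relation on a set with at least two elements admits a weak
decomposition with respect to `S` iff `S` is continuous in the first coordinate. -/
theorem weak_decomposable_iff_continuous {X : Type*} (hX : ∃ x y : X, x ≠ y)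
    (S : Tconorm) :
    (∀ R : X → X → unitInterval, ∃ P I : X → X → unitInterval, IsWeakDecomp S R P I) ↔
    (∀ b, Continuous fun a => S.S a b) := by
  constructor
  · -- decomposability → continuity
    intro hdec b
    classical
    obtain ⟨x, y, hxy⟩ := hX
    set g : unitInterval → Set.Icc b (1 : unitInterval) := fun t =>
      ⟨S.S t b, by
        constructor
        · calc b = S.S 0 b := (S.zero_S b).symm
            _ ≤ S.S t b := S.mono 0 b t b (unitInterval.nonneg') le_rfl
        · exact unitInterval.le_one _⟩ with hg
    have hmono : Monotone g := by
      intro a a' h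
      exact Subtype.mk_le_mk.mpr (S.mono a b a' b h le_rfl)
    have hsurj : Function.Surjective g := by
      rintro ⟨r, hbr, hr1⟩
      rcases eq_or_lt_of_le hbr with h | h
      · exact ⟨0, Subtype.ext (by simpa [hg] using (S.zero_S b).trans h)⟩
      · set R : X → X → unitInterval := fun u v =>
          if u = x ∧ v = y then r else if u = y ∧ v = x then b else 0 with hR
        obtain ⟨P, I, hPa, hIs, hEq, _⟩ := hdec R
        have hRxy : R x y = r := by simp [hR]
        have hRyx : R y x = b := by
          have h1 : ¬(y = x ∧ x = y) := fun h' => hxy h'.1.symm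
          simp [hR, h1]
        by_cases hp : P x y = 0
        · exfalso
          have hr : r = I x y := by
            have := hEq x y
            rw [hRxy, hp, S.zero_S] at this
            exact this
          have hb : I y x ≤ b := by
            have := hEq y x
            rw [hRyx] at this
            calc I y x = S.S 0 (I y x) := (S.zero_S _).symm
              _ ≤ S.S (P y x) (I y x) := S.mono 0 _ _ _ (unitInterval.nonneg') le_rfl
              _ = b := this.symm
          rw [hIs y x, ← hr] at hb
          exact absurd hb (not_le.mpr h)
        · have hppos : 0 < P x y := lt_of_le_of_ne (unitInterval.nonneg') (Ne.symm hp)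
          have hpyx : P y x = 0 := hPa x y hppos
          have hIb : I x y = b := by
            have := hEq y x
            rw [hRyx, hpyx, S.zero_S] at this
            rw [hIs x y]
            exact this.symm
          refine ⟨P x y, Subtype.ext ?_⟩
          have := hEq x y
          rw [hRxy, hIb] at this
          simpa [hg] using this.symm
    have hgc : Continuous g := hmono.continuous_of_surjective hsurj
    exact continuous_induced_dom.comp hgc
  · -- continuity → decomposability
    intro hc R
    set I' : X → X → unitInterval := fun x y => min (R x y) (R y x) with hI'
    have key : ∀ x y : X, ∃ t, S.S t (I' x y) = R x y := by
      intro x y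
      have h0 : (fun a => S.S a (I' x y)) 0 = I' x y := S.zero_S _
      have h1 : (fun a => S.S a (I' x y)) 1 = 1 := S.one_S _
      have := intermediate_value_univ (0 : unitInterval) 1 (hc (I' x y))
      have hmem : R x y ∈ Set.Icc ((fun a => S.S a (I' x y)) 0)
          ((fun a => S.S a (I' x y)) 1) := by
        rw [h0, h1]
        exact ⟨min_le_left _ _, unitInterval.le_one _⟩
      exact this hmem
    set P : X → X → unitInterval := fun x y =>
      if R y x < R x y then (key x y).choose else 0 with hP
    refine ⟨P, I', ?_, ?_, ?_, ?_⟩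
    · intro x y hp
      have h : R y x < R x y := by
        by_contra h
        rw [hP] at hp
        simp only [if_neg h] at hp
        exact lt_irrefl _ hp
      have : ¬ R x y < R y x := not_lt.mpr h.le
      simp [hP, this]
    · intro x y
      simp [hI', min_comm]
    · intro x y
      by_cases h : R y x < R x y
      · have := (key x y).choose_spec
        simp only [hP, if_pos h]
        exact this.symm
      · have hmin : I' x y = R x y := by
          simp [hI', min_eq_left (not_lt.mp h)]
        simp only [hP, if_neg h]
        rw [S.zero_S, hmin]
    · intro x y h
      have h1 : R y x = 1 := by
        have h2 := min_le_right (R x y) (R y x)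
        rw [show R x y ⊓ R y x = I' x y from rfl, h] at h2
        exact le_antisymm (unitInterval.le_one _) h2
      have : ¬ R y x < R x y := by
        rw [h1]
        exact not_lt.mpr (unitInterval.le_one _)
      simp [hP, this]
end
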